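/- Let k be a finite field with q elements, n ≥ 1 an integer, and R = k[X]/(X^n). Then the number of R-submodules L of R × R such that L is isomorphic to R as an R-module and the quotient (R × R)/L is isomorphic to R as an R-module equals q^n + q^{n−1}. -/

import Mathlib

set_option synthInstance.maxHeartbeats 1000000
set_option maxHeartbeats 1000000

open Polynomial

/-- The ring of truncated polynomials `R = k[X]/(X^n)`. -/
abbrev TruncPoly (k : Type*) [Field k] (n : ℕ) : Type _ :=
  k[X] ⧸ Ideal.span {(X : k[X]) ^ n}

section Aux

variable {k : Type*} [Field k] {n : ℕ}

noncomputable def qmk (k : Type*) [Field k] (n : ℕ) : k[X] →+* TruncPoly k n :=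
  Ideal.Quotient.mk (Ideal.span {(X : k[X]) ^ n})

noncomputable def xx (k : Type*) [Field k] (n : ℕ) : TruncPoly k n := qmk k n X

lemma qmk_surjective : Function.Surjective (qmk k n) :=
  Ideal.Quotient.mk_surjective

lemma qmk_eq_zero_iff (p : k[X]) : qmk k n p = 0 ↔ (X : k[X]) ^ n ∣ p := by
  rw [qmk, Ideal.Quotient.eq_zero_iff_mem, Ideal.mem_span_singleton]

lemma xx_pow_n : (xx k n) ^ n = 0 := by
  rw [xx, ← map_pow, qmk_eq_zero_iff]

lemma xx_pow_pred (hn : 1 ≤ n) : (xx k n) ^ (n - 1) ≠ 0 := by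
  rw [xx, ← map_pow, Ne, qmk_eq_zero_iff]
  intro hdvd
  have h1 : ((X : k[X]) ^ n).natDegree ≤ ((X : k[X]) ^ (n - 1)).natDegree :=
    Polynomial.natDegree_le_of_dvd hdvd (pow_ne_zero _ Polynomial.X_ne_zero)
  simp only [Polynomial.natDegree_X_pow] at h1
  omega

noncomputable def eps (k : Type*) [Field k] (n : ℕ) (hn : 1 ≤ n) :
    TruncPoly k n →ₐ[k] k :=
  Ideal.Quotient.liftₐ _ (Polynomial.aeval (0 : k)) (by
    intro p hp
    rw [Ideal.mem_span_singleton] at hp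
    obtain ⟨g, rfl⟩ := hp
    rw [map_mul, map_pow, Polynomial.aeval_X, zero_pow (by omega : n ≠ 0), zero_mul])

lemma eps_mk (hn : 1 ≤ n) (p : k[X]) :
    eps k n hn (qmk k n p) = p.coeff 0 := by
  show Polynomial.aeval (0 : k) p = p.coeff 0
  rw [Polynomial.coeff_zero_eq_eval_zero]
  simp [Polynomial.aeval_def, Polynomial.eval]

lemma eps_algebraMap (hn : 1 ≤ n) (c : k) :
    eps k n hn (algebraMap k (TruncPoly k n) c) = c := by
  simp

lemma eps_eq_zero_iff (hn : 1 ≤ n) (a : TruncPoly k n) :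
    eps k n hn a = 0 ↔ ∃ b, a = xx k n * b := by
  obtain ⟨p, rfl⟩ := qmk_surjective (n := n) a
  rw [eps_mk]
  constructor
  · intro h
    obtain ⟨g, hg⟩ := Polynomial.X_dvd_iff.mpr h
    exact ⟨qmk k n g, by rw [hg, map_mul]; rfl⟩
  · rintro ⟨b, hb⟩
    have h2 : eps k n hn (qmk k n p) = 0 := by
      rw [hb, map_mul]
      have hx : eps k n hn (xx k n) = 0 := by
        rw [xx, eps_mk]; simp
      rw [hx, zero_mul]
    rwa [eps_mk] at h2

lemma isUnit_iff_eps (hn : 1 ≤ n) (a : TruncPoly k n) :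
    IsUnit a ↔ eps k n hn a ≠ 0 := by
  constructor
  · intro h h0
    have h1 := h.map (eps k n hn)
    rw [h0] at h1
    exact not_isUnit_zero h1
  · intro h
    set c := eps k n hn a with hc
    have h1 : eps k n hn (a - algebraMap k (TruncPoly k n) c) = 0 := by
      rw [map_sub, eps_algebraMap, sub_self]
    obtain ⟨b, hb⟩ := (eps_eq_zero_iff hn _).mp h1
    have ha : a = algebraMap k (TruncPoly k n) c + xx k n * b := by
      rw [← hb]; ring
    have hnil : IsNilpotent (xx k n * b) :=
      ⟨n, by rw [mul_pow, xx_pow_n, zero_mul]⟩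
    have hu : IsUnit (algebraMap k (TruncPoly k n) c) :=
      (isUnit_iff_ne_zero.mpr h).map (algebraMap k (TruncPoly k n))
    rw [ha]
    exact IsNilpotent.isUnit_add_left_of_commute hnil hu (Commute.all _ _)

lemma not_isUnit_exists (hn : 1 ≤ n) {a : TruncPoly k n} (h : ¬ IsUnit a) :
    ∃ b, a = xx k n * b := by
  rw [isUnit_iff_eps hn, not_not] at h
  exact (eps_eq_zero_iff hn a).mp h

end Aux

section Span

variable {A : Type*} [CommRing A]

lemma span_unit_fst (u w : A) (hu : IsUnit u) :
    Nonempty ((Submodule.span A {((u, w) : A × A)}) ≃ₗ[A] A) ∧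
    Nonempty (((A × A) ⧸ Submodule.span A {((u, w) : A × A)}) ≃ₗ[A] A) := by
  obtain ⟨U, hU⟩ := hu
  have hUinv : (↑U⁻¹ : A) * u = 1 := by rw [← hU]; exact U.inv_mul
  have hUinv2 : u * (↑U⁻¹ : A) = 1 := by rw [← hU]; exact U.mul_inv
  constructor
  · have hinj : Function.Injective (LinearMap.toSpanSingleton A (A × A) (u, w)) := by
      intro r s hrs
      simp only [LinearMap.toSpanSingleton_apply, Prod.smul_mk, smul_eq_mul] at hrs
      have h1 : r * u = s * u := congrArg Prod.fst hrs
      have h3 : r * u * ↑U⁻¹ = s * u * ↑U⁻¹ := by rw [h1]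
      rwa [mul_assoc, mul_assoc, hUinv2, mul_one, mul_one] at h3
    exact ⟨((LinearEquiv.ofEq _ _ (LinearMap.span_singleton_eq_range A (A × A) (u, w))).trans
      (LinearEquiv.ofInjective _ hinj).symm)⟩
  · set c : A := ↑U⁻¹ * w with hc
    set ψ : (A × A) →ₗ[A] A := LinearMap.snd A A A - c • LinearMap.fst A A A with hψdef
    have hψ : ∀ p : A × A, ψ p = p.2 - c * p.1 := fun p => by
      simp [hψdef, smul_eq_mul]
    have hsurj : Function.Surjective ψ := fun t => ⟨(0, t), by rw [hψ]; simp⟩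
    have hker : LinearMap.ker ψ = Submodule.span A {((u, w) : A × A)} := by
      apply le_antisymm
      · rintro ⟨s, t⟩ hp
        rw [LinearMap.mem_ker, hψ] at hp
        have h2 : t = c * s := sub_eq_zero.mp hp
        rw [Submodule.mem_span_singleton]
        refine ⟨s * ↑U⁻¹, ?_⟩
        rw [Prod.smul_mk, smul_eq_mul, smul_eq_mul, Prod.mk.injEq]
        constructor
        · rw [mul_assoc, mul_comm (↑U⁻¹ : A) u, hUinv2, mul_one]
        · rw [h2, hc]; ring
      · rw [Submodule.span_le, Set.singleton_subset_iff, SetLike.mem_coe,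
          LinearMap.mem_ker, hψ, hc]
        calc w - ↑U⁻¹ * w * u = w - (↑U⁻¹ * u) * w := by ring
        _ = 0 := by rw [hUinv]; ring
    exact ⟨(Submodule.quotEquivOfEq _ _ hker.symm).trans (ψ.quotKerEquivOfSurjective hsurj)⟩

lemma span_unit_snd (w u : A) (hu : IsUnit u) :
    Nonempty ((Submodule.span A {((w, u) : A × A)}) ≃ₗ[A] A) ∧
    Nonempty (((A × A) ⧸ Submodule.span A {((w, u) : A × A)}) ≃ₗ[A] A) := by
  obtain ⟨U, hU⟩ := hu
  have hUinv : (↑U⁻¹ : A) * u = 1 := by rw [← hU]; exact U.inv_mul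
  have hUinv2 : u * (↑U⁻¹ : A) = 1 := by rw [← hU]; exact U.mul_inv
  constructor
  · have hinj : Function.Injective (LinearMap.toSpanSingleton A (A × A) (w, u)) := by
      intro r s hrs
      simp only [LinearMap.toSpanSingleton_apply, Prod.smul_mk, smul_eq_mul] at hrs
      have h1 : r * u = s * u := congrArg Prod.snd hrs
      have h3 : r * u * ↑U⁻¹ = s * u * ↑U⁻¹ := by rw [h1]
      rwa [mul_assoc, mul_assoc, hUinv2, mul_one, mul_one] at h3
    exact ⟨((LinearEquiv.ofEq _ _ (LinearMap.span_singleton_eq_range A (A × A) (w, u))).trans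
      (LinearEquiv.ofInjective _ hinj).symm)⟩
  · set c : A := ↑U⁻¹ * w with hc
    set ψ : (A × A) →ₗ[A] A := LinearMap.fst A A A - c • LinearMap.snd A A A with hψdef
    have hψ : ∀ p : A × A, ψ p = p.1 - c * p.2 := fun p => by
      simp [hψdef, smul_eq_mul]
    have hsurj : Function.Surjective ψ := fun t => ⟨(t, 0), by rw [hψ]; simp⟩
    have hker : LinearMap.ker ψ = Submodule.span A {((w, u) : A × A)} := by
      apply le_antisymm
      · rintro ⟨s, t⟩ hp
        rw [LinearMap.mem_ker, hψ] at hp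
        have h2 : s = c * t := sub_eq_zero.mp hp
        rw [Submodule.mem_span_singleton]
        refine ⟨t * ↑U⁻¹, ?_⟩
        rw [Prod.smul_mk, smul_eq_mul, smul_eq_mul, Prod.mk.injEq]
        constructor
        · rw [h2, hc]; ring
        · rw [mul_assoc, mul_comm (↑U⁻¹ : A) u, hUinv2, mul_one]
      · rw [Submodule.span_le, Set.singleton_subset_iff, SetLike.mem_coe,
          LinearMap.mem_ker, hψ, hc]
        calc w - ↑U⁻¹ * w * u = w - (↑U⁻¹ * u) * w := by ring
        _ = 0 := by rw [hUinv]; ring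
    exact ⟨(Submodule.quotEquivOfEq _ _ hker.symm).trans (ψ.quotKerEquivOfSurjective hsurj)⟩

end Span

lemma trunc_basis (k : Type*) [Field k] (n : ℕ) :
    ∃ b : Module.Basis (Fin n) k (TruncPoly k n), True := by
  let pb := AdjoinRoot.powerBasis' (Polynomial.monic_X_pow (R := k) (n := n))
  have hd : pb.dim = n := by
    show (AdjoinRoot.powerBasis' _).dim = n
    rw [AdjoinRoot.powerBasis'_dim, Polynomial.natDegree_X_pow]
  have b : Module.Basis (Fin pb.dim) k (TruncPoly k n) := pb.basis
  exact ⟨b.reindex (finCongr hd), trivial⟩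

lemma card_trunc (k : Type*) [Field k] [Fintype k] (n : ℕ) :
    Nat.card (TruncPoly k n) = Fintype.card k ^ n := by
  obtain ⟨b, -⟩ := trunc_basis k n
  haveI : Fintype (TruncPoly k n) := Module.fintypeOfFintype b
  rw [Nat.card_eq_fintype_card, Module.card_fintype b, Fintype.card_fin]

lemma finite_trunc (k : Type*) [Field k] [Fintype k] (n : ℕ) :
    Finite (TruncPoly k n) := by
  obtain ⟨b, -⟩ := trunc_basis k n
  haveI : Fintype (TruncPoly k n) := Module.fintypeOfFintype b
  exact Finite.of_fintype _

lemma card_nonunits (k : Type*) [Field k] [Fintype k] (n : ℕ) (hn : 1 ≤ n) :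
    Nat.card {a : TruncPoly k n // ¬ IsUnit a} = Fintype.card k ^ (n - 1) := by
  haveI : Finite (TruncPoly k n) := finite_trunc k n
  set N := LinearMap.ker (eps k n hn).toLinearMap with hN
  have e1 : {a : TruncPoly k n // ¬ IsUnit a} ≃ N := by
    apply Equiv.subtypeEquivRight
    intro a
    rw [isUnit_iff_eps hn a, not_not, hN, LinearMap.mem_ker, AlgHom.toLinearMap_apply]
  have hsurj : Function.Surjective (eps k n hn).toLinearMap := by
    intro c
    exact ⟨algebraMap k _ c, by rw [AlgHom.toLinearMap_apply, eps_algebraMap]⟩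
  have e2 : (TruncPoly k n ⧸ N) ≃ₗ[k] k :=
    LinearMap.quotKerEquivOfSurjective _ hsurj
  have h3 := Submodule.card_eq_card_quotient_mul_card N
  rw [Nat.card_congr e2.toEquiv, card_trunc k n, Nat.card_eq_fintype_card (α := k)] at h3
  have hq0 : 0 < Fintype.card k := Fintype.card_pos
  have h4 : Fintype.card k ^ n = Fintype.card k ^ (n - 1) * Fintype.card k := by
    rw [← pow_succ]
    congr 1
    omega
  rw [h4] at h3
  have h5 : Nat.card N = Fintype.card k ^ (n - 1) :=
    Nat.eq_of_mul_eq_mul_right hq0 h3.symm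
  rw [Nat.card_congr e1, h5]

theorem card_free_rank_one_submodules_with_free_quotient
    (k : Type*) [Field k] [Fintype k] (q : ℕ) (hq : Fintype.card k = q)
    (n : ℕ) (hn : 1 ≤ n) :
    Nat.card {L : Submodule (TruncPoly k n) (TruncPoly k n × TruncPoly k n) //
        Nonempty (L ≃ₗ[TruncPoly k n] TruncPoly k n) ∧
        Nonempty (((TruncPoly k n × TruncPoly k n) ⧸ L) ≃ₗ[TruncPoly k n] TruncPoly k n)} =
      q ^ n + q ^ (n - 1) := by
  subst hq
  classical
  haveI : Finite (TruncPoly k n) := finite_trunc k n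
  let g : (TruncPoly k n ⊕ {a : TruncPoly k n // ¬ IsUnit a}) →
      {L : Submodule (TruncPoly k n) (TruncPoly k n × TruncPoly k n) //
        Nonempty (L ≃ₗ[TruncPoly k n] TruncPoly k n) ∧
        Nonempty (((TruncPoly k n × TruncPoly k n) ⧸ L) ≃ₗ[TruncPoly k n] TruncPoly k n)} :=
    fun z => Sum.rec
      (fun b => ⟨Submodule.span _ {((1, b) : TruncPoly k n × TruncPoly k n)},
        span_unit_fst 1 b isUnit_one⟩)
      (fun a => ⟨Submodule.span _ {((a.1, 1) : TruncPoly k n × TruncPoly k n)},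
        span_unit_snd a.1 1 isUnit_one⟩) z
  have hginj : Function.Injective g := by
    rintro (b | a) (b' | a') h
    · have hsp : Submodule.span (TruncPoly k n) {((1, b) : TruncPoly k n × TruncPoly k n)} =
          Submodule.span (TruncPoly k n) {((1, b') : TruncPoly k n × TruncPoly k n)} :=
        congrArg Subtype.val h
      have hmem : ((1, b) : TruncPoly k n × TruncPoly k n) ∈
          Submodule.span (TruncPoly k n) {((1, b') : TruncPoly k n × TruncPoly k n)} := by
        rw [← hsp]; exact Submodule.mem_span_singleton_self _
      rw [Submodule.mem_span_singleton] at hmem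
      obtain ⟨r, hr⟩ := hmem
      rw [Prod.smul_mk, smul_eq_mul, smul_eq_mul, mul_one, Prod.mk.injEq] at hr
      obtain ⟨hr1, hr2⟩ := hr
      subst hr1
      rw [one_mul] at hr2
      rw [hr2]
    · exfalso
      have hsp : Submodule.span (TruncPoly k n) {((1, b) : TruncPoly k n × TruncPoly k n)} =
          Submodule.span (TruncPoly k n) {((a'.1, 1) : TruncPoly k n × TruncPoly k n)} :=
        congrArg Subtype.val h
      have hmem : ((1, b) : TruncPoly k n × TruncPoly k n) ∈
          Submodule.span (TruncPoly k n) {((a'.1, 1) : TruncPoly k n × TruncPoly k n)} := by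
        rw [← hsp]; exact Submodule.mem_span_singleton_self _
      rw [Submodule.mem_span_singleton] at hmem
      obtain ⟨r, hr⟩ := hmem
      rw [Prod.smul_mk, smul_eq_mul, smul_eq_mul, Prod.mk.injEq] at hr
      exact a'.2 (IsUnit.of_mul_eq_one r (by rw [mul_comm]; exact hr.1))
    · exfalso
      have hsp : Submodule.span (TruncPoly k n) {((a.1, 1) : TruncPoly k n × TruncPoly k n)} =
          Submodule.span (TruncPoly k n) {((1, b') : TruncPoly k n × TruncPoly k n)} :=
        congrArg Subtype.val h
      have hmem : ((1, b') : TruncPoly k n × TruncPoly k n) ∈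
          Submodule.span (TruncPoly k n) {((a.1, 1) : TruncPoly k n × TruncPoly k n)} := by
        rw [hsp]; exact Submodule.mem_span_singleton_self _
      rw [Submodule.mem_span_singleton] at hmem
      obtain ⟨r, hr⟩ := hmem
      rw [Prod.smul_mk, smul_eq_mul, smul_eq_mul, Prod.mk.injEq] at hr
      exact a.2 (IsUnit.of_mul_eq_one r (by rw [mul_comm]; exact hr.1))
    · have hsp : Submodule.span (TruncPoly k n) {((a.1, 1) : TruncPoly k n × TruncPoly k n)} =
          Submodule.span (TruncPoly k n) {((a'.1, 1) : TruncPoly k n × TruncPoly k n)} :=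
        congrArg Subtype.val h
      have hmem : ((a.1, 1) : TruncPoly k n × TruncPoly k n) ∈
          Submodule.span (TruncPoly k n) {((a'.1, 1) : TruncPoly k n × TruncPoly k n)} := by
        rw [← hsp]; exact Submodule.mem_span_singleton_self _
      rw [Submodule.mem_span_singleton] at hmem
      obtain ⟨r, hr⟩ := hmem
      rw [Prod.smul_mk, smul_eq_mul, smul_eq_mul, mul_one, Prod.mk.injEq] at hr
      obtain ⟨hr1, hr2⟩ := hr
      subst hr2
      rw [one_mul] at hr1
      congr 1
      exact Subtype.ext hr1.symm
  have hgsurj : Function.Surjective g := by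
    rintro ⟨L, hc⟩
    obtain ⟨φ⟩ := hc.1
    set e := φ.symm with he
    set v : TruncPoly k n × TruncPoly k n := (e 1 : TruncPoly k n × TruncPoly k n) with hv
    have hcoe : ∀ r : TruncPoly k n, ((e r : L) : TruncPoly k n × TruncPoly k n) = r • v := by
      intro r
      calc ((e r : L) : TruncPoly k n × TruncPoly k n)
          = ((e (r • (1 : TruncPoly k n)) : L) : TruncPoly k n × TruncPoly k n) := by
            rw [smul_eq_mul, mul_one]
        _ = ((r • e 1 : L) : TruncPoly k n × TruncPoly k n) := by rw [map_smul]
        _ = r • v := rfl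
    have hLspan : L = Submodule.span (TruncPoly k n) {v} := by
      apply le_antisymm
      · intro l hl
        have h6 : l = (φ ⟨l, hl⟩ : TruncPoly k n) • v := by
          have h7 := hcoe (φ ⟨l, hl⟩)
          rw [he, LinearEquiv.symm_apply_apply] at h7
          exact h7
        rw [Submodule.mem_span_singleton]
        exact ⟨_, h6.symm⟩
      · rw [Submodule.span_le, Set.singleton_subset_iff]
        exact (e 1).2
    have hreg : ∀ r : TruncPoly k n, r • v = 0 → r = 0 := by
      intro r hr
      have h8 : e r = 0 := by
        apply Subtype.ext
        rw [hcoe r, hr]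
        rfl
      exact e.injective (h8.trans (map_zero e).symm)
    by_cases hu : IsUnit v.1
    · obtain ⟨U, hU⟩ := hu
      refine ⟨Sum.inl (↑U⁻¹ * v.2), Subtype.ext ?_⟩
      show Submodule.span (TruncPoly k n)
          {((1, ↑U⁻¹ * v.2) : TruncPoly k n × TruncPoly k n)} = L
      rw [hLspan]
      have hv2 : v = (↑U : TruncPoly k n) •
          ((1, ↑U⁻¹ * v.2) : TruncPoly k n × TruncPoly k n) := by
        rw [Prod.smul_mk, smul_eq_mul, smul_eq_mul, mul_one, ← mul_assoc, U.mul_inv,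
          one_mul, hU]
      conv_rhs => rw [hv2]
      rw [Submodule.span_singleton_smul_eq U.isUnit]
    · have hub : IsUnit v.2 := by
        by_contra hub
        obtain ⟨b1, hb1⟩ := not_isUnit_exists hn hu
        obtain ⟨b2, hb2⟩ := not_isUnit_exists hn hub
        have hxn : xx k n ^ (n - 1) * xx k n = 0 := by
          rw [← pow_succ]
          have hn1 : n - 1 + 1 = n := by omega
          rw [hn1, xx_pow_n]
        have h9 : (xx k n ^ (n - 1)) • v = 0 := by
          have hvv : v = (v.1, v.2) := rfl
          rw [hvv, Prod.smul_mk, smul_eq_mul, smul_eq_mul, hb1, hb2, ← mul_assoc,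
            ← mul_assoc, hxn, zero_mul, zero_mul]
          rfl
        exact xx_pow_pred hn (hreg _ h9)
      obtain ⟨U, hU⟩ := hub
      have hnu : ¬ IsUnit ((↑U⁻¹ : TruncPoly k n) * v.1) := by
        intro hc2
        apply hu
        have h10 : v.1 = ↑U * (↑U⁻¹ * v.1) := by rw [← mul_assoc, U.mul_inv, one_mul]
        rw [h10]
        exact U.isUnit.mul hc2
      refine ⟨Sum.inr ⟨↑U⁻¹ * v.1, hnu⟩, Subtype.ext ?_⟩
      show Submodule.span (TruncPoly k n)
          {((↑U⁻¹ * v.1, 1) : TruncPoly k n × TruncPoly k n)} = L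
      rw [hLspan]
      have hv2 : v = (↑U : TruncPoly k n) •
          ((↑U⁻¹ * v.1, 1) : TruncPoly k n × TruncPoly k n) := by
        rw [Prod.smul_mk, smul_eq_mul, smul_eq_mul, mul_one, ← mul_assoc, U.mul_inv,
          one_mul, hU]
      conv_rhs => rw [hv2]
      rw [Submodule.span_singleton_smul_eq U.isUnit]
  have key := (Equiv.ofBijective g ⟨hginj, hgsurj⟩).symm
  rw [Nat.card_congr key, Nat.card_sum, card_trunc, card_nonunits k n hn]
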